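/- arXiv:2310.14647 — 3 statements merged into one kernel-verified Lean document; each statement's English description precedes it below -/
import Mathlib

section
/- For every finite simple graph G, the indicated domination number is at most the Grundy domination number: γᵢ(G) ≤ γ_gr(G). -/
open Finset

open scoped Classical

noncomputable section

namespace IndicatedDom

variable {V : Type*} [Fintype V]

/-- Closed neighborhood `N[v]` as a `Finset`. -/
def cnbhd (G : SimpleGraph V) (v : V) : Finset V :=
  insert v (G.neighborFinset v)

/-- `D` is a dominating set of `G`. -/
def Dominates (G : SimpleGraph V) (D : Finset V) : Prop :=
  ∀ u, ∃ v ∈ D, u ∈ cnbhd G v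

/-- The set of vertices not dominated by `D`. -/
def undom (G : SimpleGraph V) (D : Finset V) : Finset V :=
  univ.filter fun u => ∀ v ∈ D, u ∉ cnbhd G v

/-- Game value of the indicated domination game with a fuel parameter:
given the set `D` of vertices selected so far, Dominator indicates an
undominated vertex `u` (minimizing), Staller selects a vertex of `N[u]`
(maximizing); each selection counts one. -/
def giAux (G : SimpleGraph V) : ℕ → Finset V → ℕ
  | 0, _ => 0
  | (fuel+1), D =>
    if h : (undom G D).Nonempty then
      (undom G D).inf' h fun u =>
        (cnbhd G u).sup' ⟨u, Finset.mem_insert_self u _⟩ fun v => giAux G fuel (insert v D) + 1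
    else 0

/-- The indicated domination number `γᵢ(G)`. -/
def indicatedDomNum (G : SimpleGraph V) : ℕ :=
  giAux G (Fintype.card V) ∅

/-- Game value of the standard domination game with a fuel parameter:
`dom = true` means it is Dominator's turn (minimizing); legal moves are
vertices dominating at least one new vertex. -/
def gameAux (G : SimpleGraph V) : ℕ → Bool → Finset V → ℕ
  | 0, _, _ => 0
  | (fuel+1), dom, D =>
    if h : (univ.filter fun v => ∃ u ∈ cnbhd G v, u ∈ undom G D).Nonempty then
      if dom then
        (univ.filter fun v => ∃ u ∈ cnbhd G v, u ∈ undom G D).inf' h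
          fun v => gameAux G fuel false (insert v D) + 1
      else
        (univ.filter fun v => ∃ u ∈ cnbhd G v, u ∈ undom G D).sup' h
          fun v => gameAux G fuel true (insert v D) + 1
    else 0

/-- The game domination number `γ_g(G)` (Dominator starts). -/
def gameDomNum (G : SimpleGraph V) : ℕ :=
  gameAux G (Fintype.card V) true ∅

/-- A minimal dominating set. -/
def IsMinimalDominating (G : SimpleGraph V) (D : Finset V) : Prop :=
  Dominates G D ∧ ∀ D' ⊂ D, ¬ Dominates G D'

/-- The upper domination number `Γ(G)`. -/
def upperDomNum (G : SimpleGraph V) : ℕ :=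
  sSup {k | ∃ D : Finset V, IsMinimalDominating G D ∧ D.card = k}

/-- A dominating (Grundy) sequence: every vertex dominates something new,
and the whole sequence dominates `G`. -/
def IsDominatingSeq (G : SimpleGraph V) (l : List V) : Prop :=
  (∀ i : Fin l.length, ∃ u, u ∈ cnbhd G (l.get i) ∧
      ∀ j : Fin l.length, (j : ℕ) < (i : ℕ) → u ∉ cnbhd G (l.get j)) ∧
    Dominates G l.toFinset

/-- The Grundy domination number `γ_gr(G)`. -/
def grundyDomNum (G : SimpleGraph V) : ℕ :=
  sSup {k | ∃ l : List V, IsDominatingSeq G l ∧ l.length = k}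

/-- The independence number `α(G)`. -/
def indepNum (G : SimpleGraph V) : ℕ :=
  sSup {k | ∃ S : Finset V, (∀ x ∈ S, ∀ y ∈ S, ¬ G.Adj x y) ∧ S.card = k}

/-- `S` is irredundant: every `x ∈ S` has a private neighbor w.r.t. `S`. -/
def Irredundant (G : SimpleGraph V) (S : Finset V) : Prop :=
  ∀ x ∈ S, ∃ w, (∃ v ∈ S, w ∈ cnbhd G v) ∧ ¬ ∃ v ∈ S.erase x, w ∈ cnbhd G v

/-- The upper irredundance number `IR(G)`. -/
def upperIrredNum (G : SimpleGraph V) : ℕ :=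
  sSup {k | ∃ S : Finset V, Irredundant G S ∧ (∀ T, S ⊂ T → ¬ Irredundant G T) ∧ S.card = k}

/-- The star `K_{1,n}` with center `0`. -/
def starGraph (n : ℕ) : SimpleGraph (Fin (n+1)) where
  Adj a b := a ≠ b ∧ (a = 0 ∨ b = 0)
  symm := by constructor; intro a b h; exact ⟨h.1.symm, h.2.symm⟩
  loopless := by constructor; intro a h; exact h.1 rfl

/-- Two copies of `K_n` with a matching joining corresponding vertices of
index `≥ 1` (i.e. `K_n □ K₂` minus the matching edge at index `0`). -/
def Hgraph (n : ℕ) : SimpleGraph (Fin n × Bool) where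
  Adj a b := (a.2 = b.2 ∧ a.1 ≠ b.1) ∨ (a.2 ≠ b.2 ∧ a.1 = b.1 ∧ (a.1 : ℕ) ≠ 0)
  symm := by
    constructor
    rintro ⟨i, s⟩ ⟨j, t⟩ (⟨h1, h2⟩ | ⟨h1, h2, h3⟩)
    · exact Or.inl ⟨h1.symm, h2.symm⟩
    · exact Or.inr ⟨h1.symm, h2.symm, h2 ▸ h3⟩
  loopless := by constructor; rintro ⟨i, s⟩ (⟨_, h⟩ | ⟨h, _⟩) <;> exact h rfl

/-- The `k`-th power of the path on `n` vertices: `i ~ j` iff `1 ≤ |i-j| ≤ k`. -/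
def pathPow (n k : ℕ) : SimpleGraph (Fin n) where
  Adj i j := i ≠ j ∧ (i : ℕ) ≤ (j : ℕ) + k ∧ (j : ℕ) ≤ (i : ℕ) + k
  symm := by constructor; intro i j h; exact ⟨h.1.symm, h.2.2, h.2.1⟩
  loopless := by constructor; intro i h; exact h.1 rfl

/-- The cycle on `m` vertices (for `m ≥ 3`), modeled on `ZMod m`. -/
def cyc (m : ℕ) : SimpleGraph (ZMod m) where
  Adj i j := i ≠ j ∧ (i + 1 = j ∨ j + 1 = i)
  symm := by constructor; intro i j h; exact ⟨h.1.symm, h.2.symm⟩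
  loopless := by constructor; intro i h; exact h.1 rfl

/-- The graph `D₁`: a `9`-cycle `x₁x₂…x₉` plus chords `x₁x₃, x₄x₆, x₇x₉`
(vertex `xᵢ` is represented by `i - 1 : ZMod 9`). -/
def DGraph : SimpleGraph (ZMod 9) where
  Adj i j := i ≠ j ∧ (i + 1 = j ∨ j + 1 = i ∨
    (i = 0 ∧ j = 2) ∨ (i = 2 ∧ j = 0) ∨ (i = 3 ∧ j = 5) ∨ (i = 5 ∧ j = 3) ∨
    (i = 6 ∧ j = 8) ∨ (i = 8 ∧ j = 6))
  symm := by constructor; intro i j h; refine ⟨h.1.symm, ?_⟩; tauto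
  loopless := by constructor; intro i h; exact h.1 rfl



/-- A dominating sequence relative to an already-selected set `D`. -/
def RelSeq (G : SimpleGraph V) (D : Finset V) (l : List V) : Prop :=
  (∀ i : Fin l.length, ∃ u, u ∈ cnbhd G (l.get i) ∧ (∀ v ∈ D, u ∉ cnbhd G v) ∧
      ∀ j : Fin l.length, (j : ℕ) < (i : ℕ) → u ∉ cnbhd G (l.get j)) ∧
    Dominates G (D ∪ l.toFinset)

def relSet (G : SimpleGraph V) (D : Finset V) : Set ℕ :=
  {k | ∃ l : List V, RelSeq G D l ∧ l.length = k}

lemma cnbhd_comm (G : SimpleGraph V) {u v : V} : u ∈ cnbhd G v ↔ v ∈ cnbhd G u := by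
  simp only [cnbhd, Finset.mem_insert, SimpleGraph.mem_neighborFinset]
  constructor
  · rintro (rfl | h)
    · exact Or.inl rfl
    · exact Or.inr h.symm
  · rintro (rfl | h)
    · exact Or.inl rfl
    · exact Or.inr h.symm

lemma relSeq_length_le (G : SimpleGraph V) (D : Finset V) (l : List V)
    (h : RelSeq G D l) : l.length ≤ Fintype.card V := by
  choose u hu hD hnew using h.1
  have hinj : Function.Injective u := by
    intro i j hij
    by_contra hne
    rcases lt_or_gt_of_ne (fun h => hne (Fin.ext h)) with hlt | hlt
    · exact hnew j i hlt (hij ▸ hu i)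
    · exact hnew i j hlt (hij.symm ▸ hu j)
  simpa using Fintype.card_le_of_injective u hinj

lemma relSet_bddAbove (G : SimpleGraph V) (D : Finset V) : BddAbove (relSet G D) :=
  ⟨Fintype.card V, fun _ ⟨l, hl, hlen⟩ => hlen ▸ relSeq_length_le G D l hl⟩

lemma RelSeq.cons {G : SimpleGraph V} {D : Finset V} {v w : V} {l : List V}
    (hl : RelSeq G (insert v D) l) (hw : w ∈ undom G D) (hwv : w ∈ cnbhd G v) :
    RelSeq G D (v :: l) := by
  have hwD : ∀ x ∈ D, w ∉ cnbhd G x := by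
    have := hw; simp only [undom, Finset.mem_filter] at this; exact this.2
  constructor
  · rintro ⟨i, hi⟩
    cases i with
    | zero =>
      refine ⟨w, hwv, hwD, ?_⟩
      rintro ⟨j, hj⟩ hji
      simp at hji
    | succ k =>
      have hk : k < l.length := Nat.lt_of_succ_lt_succ hi
      obtain ⟨u, hu1, hu2, hu3⟩ := hl.1 ⟨k, hk⟩
      refine ⟨u, hu1, fun x hx => hu2 x (Finset.mem_insert_of_mem hx), ?_⟩
      rintro ⟨j, hj⟩ hji
      cases j with
      | zero => exact hu2 v (Finset.mem_insert_self v D)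
      | succ m =>
        exact hu3 ⟨m, Nat.lt_of_succ_lt_succ hj⟩ (by simpa using Nat.lt_of_succ_lt_succ hji)
  · intro x
    obtain ⟨y, hy, hxy⟩ := hl.2 x
    refine ⟨y, ?_, hxy⟩
    simp only [List.toFinset_cons, Finset.mem_union, Finset.mem_insert] at hy ⊢
    tauto

lemma relSet_nonempty (G : SimpleGraph V) (D : Finset V) : ∃ l, RelSeq G D l := by
  have H : ∀ n (D : Finset V), (undom G D).card ≤ n → ∃ l, RelSeq G D l := by
    intro n
    induction n with
    | zero =>
      intro D hD
      refine ⟨[], fun i => i.elim0, fun x => ?_⟩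
      have hempty : undom G D = ∅ := Finset.card_eq_zero.mp (Nat.le_zero.mp hD)
      by_contra hcon
      push_neg at hcon
      have : x ∈ undom G D := by
        simp only [undom, Finset.mem_filter, Finset.mem_univ, true_and]
        intro v hv
        exact fun h => (hcon v (Finset.mem_union_left _ hv)) h
      simp [hempty] at this
    | succ n ih =>
      intro D hD
      by_cases h : (undom G D).Nonempty
      · obtain ⟨u, hu⟩ := h
        have hss : undom G (insert u D) ⊂ undom G D := by
          constructor
          · intro x hx
            simp only [undom, Finset.mem_filter] at hx ⊢
            exact ⟨hx.1, fun v hv => hx.2 v (Finset.mem_insert_of_mem hv)⟩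
          · intro hsub
            have := hsub hu
            simp only [undom, Finset.mem_filter] at this
            exact this.2 u (Finset.mem_insert_self u D) (Finset.mem_insert_self u _)
        obtain ⟨l, hl⟩ := ih (insert u D)
          (Nat.le_of_lt_succ (lt_of_lt_of_le (Finset.card_lt_card hss) hD))
        exact ⟨u :: l, hl.cons hu (Finset.mem_insert_self u _)⟩
      · refine ⟨[], fun i => i.elim0, fun x => ?_⟩
        rw [Finset.not_nonempty_iff_eq_empty] at h
        by_contra hcon
        push_neg at hcon
        have : x ∈ undom G D := by
          simp only [undom, Finset.mem_filter, Finset.mem_univ, true_and]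
          exact fun v hv => hcon v (Finset.mem_union_left _ hv)
        simp [h] at this
  exact H _ D le_rfl

lemma relStep (G : SimpleGraph V) {D : Finset V} {u v : V}
    (hu : u ∈ undom G D) (hv : v ∈ cnbhd G u) :
    sSup (relSet G (insert v D)) + 1 ≤ sSup (relSet G D) := by
  obtain ⟨l, hl⟩ := relSet_nonempty G (insert v D)
  have hmem := Nat.sSup_mem (s := relSet G (insert v D)) ⟨l.length, l, hl, rfl⟩
    (relSet_bddAbove G _)
  obtain ⟨l', hl', hlen⟩ := hmem
  have hcons : RelSeq G D (v :: l') := hl'.cons hu ((cnbhd_comm G).mpr hv)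
  exact le_csSup (relSet_bddAbove G D) ⟨v :: l', hcons, by simp [hlen]⟩

lemma giAux_le_relSup (G : SimpleGraph V) :
    ∀ fuel (D : Finset V), giAux G fuel D ≤ sSup (relSet G D) := by
  intro fuel
  induction fuel with
  | zero => intro D; simp [giAux]
  | succ n ih =>
    intro D
    rw [giAux]
    split_ifs with h
    · have hu := h.choose_spec
      refine le_trans (Finset.inf'_le _ hu) ?_
      refine Finset.sup'_le _ _ fun v hv => ?_
      calc giAux G n (insert v D) + 1 ≤ sSup (relSet G (insert v D)) + 1 :=
            Nat.succ_le_succ (ih _)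
        _ ≤ sSup (relSet G D) := relStep G hu hv
    · exact Nat.zero_le _

lemma grundy_bddAbove (G : SimpleGraph V) :
    BddAbove {k | ∃ l : List V, IsDominatingSeq G l ∧ l.length = k} := by
  refine ⟨Fintype.card V, ?_⟩
  rintro k ⟨l, hl, rfl⟩
  refine relSeq_length_le G ∅ l ⟨?_, ?_⟩
  · intro i
    obtain ⟨u, hu1, hu2⟩ := hl.1 i
    exact ⟨u, hu1, fun v hv => absurd hv (Finset.notMem_empty v), hu2⟩
  · simpa using hl.2

/-- `γᵢ(G) ≤ γ_gr(G)` for every finite simple graph. -/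
theorem stmt1 {V : Type*} [Fintype V] (G : SimpleGraph V) :
    indicatedDomNum G ≤ grundyDomNum G := by
  refine le_trans (giAux_le_relSup G (Fintype.card V) ∅) ?_
  obtain ⟨l0, hl0⟩ := relSet_nonempty G (∅ : Finset V)
  refine csSup_le ⟨l0.length, l0, hl0, rfl⟩ ?_
  rintro k ⟨l, hl, rfl⟩
  refine le_csSup (grundy_bddAbove G) ⟨l, ⟨?_, ?_⟩, rfl⟩
  · intro i
    obtain ⟨u, hu1, _, hu3⟩ := hl.1 i
    exact ⟨u, hu1, hu3⟩
  · have := hl.2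
    simpa using this


end IndicatedDom
end
end

section
/- If G has a spanning complete bipartite subgraph K_{δ, n−δ} whose part of size n − δ is independent in G (equivalently, G is the join of an independent set of size n − δ with an arbitrary graph on δ vertices), where δ = δ(G) and n = n(G), then γᵢ(G) = n − δ. -/
open Finset

open scoped Classical

noncomputable section

namespace IndicatedDom

variable {V : Type*} [Fintype V]

lemma mem_cnbhd_comm {G : SimpleGraph V} {u v : V} :
    u ∈ cnbhd G v ↔ v ∈ cnbhd G u := by
  simp only [cnbhd, Finset.mem_insert, SimpleGraph.mem_neighborFinset]
  constructor
  · rintro (rfl | h); · exact Or.inl rfl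
    · exact Or.inr h.symm
  · rintro (rfl | h); · exact Or.inl rfl
    · exact Or.inr h.symm

lemma undom_insert_subset {G : SimpleGraph V} (v : V) (D : Finset V) :
    undom G (insert v D) ⊆ undom G D := by
  intro x hx
  simp only [undom, Finset.mem_filter, Finset.mem_univ, true_and,
    Finset.mem_insert] at hx ⊢
  exact fun w hw => hx w (Or.inr hw)

lemma giAux_le_card_undom (G : SimpleGraph V) :
    ∀ fuel D, giAux G fuel D ≤ (undom G D).card := by
  intro fuel
  induction fuel with
  | zero => intro D; simp [giAux]
  | succ fuel ih =>
    intro D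
    rw [giAux]
    split
    · next h =>
      obtain ⟨u, hu⟩ := h
      refine le_trans (Finset.inf'_le _ hu) (Finset.sup'_le _ _ ?_)
      intro v hv
      have hund : u ∉ undom G (insert v D) := by
        simp only [undom, Finset.mem_filter, Finset.mem_univ, true_and]
        intro hfalse
        exact hfalse v (Finset.mem_insert_self v D) (mem_cnbhd_comm.2 hv)
      have hsub : undom G (insert v D) ⊂ undom G D :=
        (Finset.ssubset_iff_of_subset (undom_insert_subset v D)).2 ⟨u, hu, hund⟩
      have := Finset.card_lt_card hsub
      have := ih (insert v D)
      omega
    · exact Nat.zero_le _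

lemma lower_aux (G : SimpleGraph V) (B : Finset V)
    (hind : ∀ x ∈ B, ∀ y ∈ B, ¬ G.Adj x y)
    (hjoin : ∀ a ∉ B, ∀ b ∈ B, G.Adj a b) :
    ∀ fuel D, min fuel ((B ∩ undom G D).card) ≤ giAux G fuel D := by
  intro fuel
  induction fuel with
  | zero => intro D; simp
  | succ fuel ih =>
    intro D
    rcases Nat.eq_zero_or_pos ((B ∩ undom G D).card) with hk | hk
    · simp [hk]
    obtain ⟨b0, hb0⟩ := Finset.card_pos.1 hk
    have hne : (undom G D).Nonempty := ⟨b0, (Finset.mem_inter.1 hb0).2⟩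
    rw [giAux]
    rw [dif_pos hne]
    refine Finset.le_inf' _ _ ?_
    intro u hu
    -- pick v ∈ B ∩ cnbhd G u
    have hv : ∃ v ∈ B, v ∈ cnbhd G u := by
      by_cases huB : u ∈ B
      · exact ⟨u, huB, Finset.mem_insert_self u _⟩
      · refine ⟨b0, (Finset.mem_inter.1 hb0).1, ?_⟩
        simp only [cnbhd, Finset.mem_insert, SimpleGraph.mem_neighborFinset]
        exact Or.inr (hjoin u huB b0 (Finset.mem_inter.1 hb0).1)
    obtain ⟨v, hvB, hvcn⟩ := hv
    refine le_trans ?_ (Finset.le_sup' _ hvcn)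
    have hsub : (B ∩ undom G D).erase v ⊆ B ∩ undom G (insert v D) := by
      intro x hx
      obtain ⟨hxv, hxB, hxu⟩ := Finset.mem_erase.1 hx |>.imp id (Finset.mem_inter.1)
      refine Finset.mem_inter.2 ⟨hxB, ?_⟩
      simp only [undom, Finset.mem_filter, Finset.mem_univ, true_and,
        Finset.mem_insert] at hxu ⊢
      rintro w (rfl | hw)
      · simp only [cnbhd, Finset.mem_insert, SimpleGraph.mem_neighborFinset]
        push_neg
        exact ⟨hxv, fun h => hind w hvB x hxB h⟩
      · exact hxu w hw
    have hcard : (B ∩ undom G D).card - 1 ≤ (B ∩ undom G (insert v D)).card := by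
      have := Finset.card_le_card hsub
      by_cases h : v ∈ B ∩ undom G D
      · have := Finset.card_erase_of_mem h
        omega
      · rw [Finset.erase_eq_of_notMem h] at this
        omega
    have := ih (insert v D)
    omega

/-- if `G` has a spanning complete bipartite subgraph
`K_{δ, n-δ}` whose part `B` of size `n - δ` is independent in `G`,
then `γᵢ(G) = n - δ`. -/
theorem stmt5 {V : Type*} [Fintype V] (G : SimpleGraph V) (B : Finset V)
    (hcard : B.card = Fintype.card V - G.minDegree)
    (hind : ∀ x ∈ B, ∀ y ∈ B, ¬ G.Adj x y)
    (hjoin : ∀ a ∉ B, ∀ b ∈ B, G.Adj a b) :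
    indicatedDomNum G = Fintype.card V - G.minDegree := by
  rcases Nat.eq_zero_or_pos (Fintype.card V) with hn | hn
  · rw [indicatedDomNum, hn]
    simp [giAux]
  have hV : Nonempty V := Fintype.card_pos_iff.1 hn
  obtain ⟨w⟩ := hV
  have hδ : G.minDegree < Fintype.card V :=
    lt_of_le_of_lt (G.minDegree_le_degree w) (G.degree_lt_card_verts w)
  have hundom : undom G (∅ : Finset V) = univ := by simp [undom]
  have hlow : Fintype.card V - G.minDegree ≤ indicatedDomNum G := by
    have h := lower_aux G B hind hjoin (Fintype.card V) ∅
    rw [hundom, Finset.inter_univ, hcard] at h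
    unfold indicatedDomNum
    omega
  have hup : indicatedDomNum G ≤ Fintype.card V - G.minDegree := by
    unfold indicatedDomNum
    obtain ⟨m, hm⟩ : ∃ m, Fintype.card V = m + 1 :=
      ⟨Fintype.card V - 1, (Nat.succ_pred_eq_of_pos hn).symm⟩
    rw [hm, giAux]
    have hne : (undom G (∅ : Finset V)).Nonempty := by
      rw [hundom]; exact ⟨w, Finset.mem_univ w⟩
    rw [dif_pos hne]
    obtain ⟨u, hu⟩ := hne
    refine le_trans (Finset.inf'_le _ hu) (Finset.sup'_le _ _ ?_)
    intro v _
    have h1 : giAux G m (insert v ∅) ≤ (undom G (insert v ∅)).card :=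
      giAux_le_card_undom G m _
    have h2 : undom G (insert v ∅) = (cnbhd G v)ᶜ := by
      ext x
      simp only [undom, Finset.mem_filter, Finset.mem_univ, true_and, Finset.mem_compl]
      constructor
      · intro h; exact h v (Finset.mem_insert_self v ∅)
      · intro h w hw
        rcases Finset.mem_insert.1 hw with rfl | h'
        · exact h
        · exact absurd h' (Finset.notMem_empty w)
    have h3 : (cnbhd G v).card = G.degree v + 1 := by
      rw [cnbhd, Finset.card_insert_of_notMem (by simp),
        G.card_neighborFinset_eq_degree]
    have h4 : G.minDegree ≤ G.degree v := G.minDegree_le_degree v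
    have h6 := G.degree_lt_card_verts v
    rw [h2, Finset.card_compl, h3] at h1
    omega
  omega

end IndicatedDom
end
end

section
/- For every n ≥ 1, the indicated domination number of the path P_n equals ⌈n/2⌉. -/
open Finset

open scoped Classical

noncomputable section

namespace IndicatedDom

variable {V : Type*} [Fintype V]

/-- value of a segment of length `m` with interiority flags `L`, `R` -/
def gseg (m : ℕ) (L R : Bool) : ℕ :=
  (m + 1) / 2 + (if (L && R) = true ∧ m % 2 = 0 ∧ m ≠ 0 then 1 else 0)

lemma gseg_zero (L R : Bool) : gseg 0 L R = 0 := by simp [gseg]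

/-- Staller's per-segment guarantee. -/
lemma A_seg (ℓ q : ℕ) (hq1 : 1 ≤ q) (hq2 : q ≤ ℓ) (L R : Bool) :
    ∃ p : ℕ, p ≤ ℓ + 1 ∧ q ≤ p + 1 ∧ p ≤ q + 1 ∧ (p = 0 → L = true) ∧
      (p = ℓ + 1 → R = true) ∧
      gseg ℓ L R ≤ gseg (p - 2) L true + gseg (ℓ - p - 1) true R + 1 := by
  cases L <;> cases R
  · by_cases hq : q % 2 = 1
    · exact ⟨q, by omega, by omega, by omega, fun h => absurd h (by omega),
        fun h => absurd h (by omega), by simp [gseg]; first | omega | (split_ifs <;> omega)⟩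
    · exact ⟨q - 1, by omega, by omega, by omega, fun h => absurd h (by omega),
        fun h => absurd h (by omega), by simp [gseg]; first | omega | (split_ifs <;> omega)⟩
  · by_cases hq : q % 2 = 1
    · exact ⟨q, by omega, by omega, by omega, fun h => absurd h (by omega),
        by simp, by simp [gseg]; first | omega | (split_ifs <;> omega)⟩
    · exact ⟨q - 1, by omega, by omega, by omega, fun h => absurd h (by omega),
        by simp, by simp [gseg]; first | omega | (split_ifs <;> omega)⟩
  · -- L = true, R = false : pick p ≡ ℓ (mod 2)
    by_cases hq : q % 2 = ℓ % 2
    · exact ⟨q, by omega, by omega, by omega, by simp, fun h => absurd h (by omega),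
        by simp [gseg]; first | omega | (split_ifs <;> omega)⟩
    · exact ⟨q - 1, by omega, by omega, by omega, by simp, fun h => absurd h (by omega),
        by simp [gseg]; first | omega | (split_ifs <;> omega)⟩
  · -- L = R = true
    by_cases hl : ℓ % 2 = 1
    · by_cases hq : q % 2 = 1
      · exact ⟨q, by omega, by omega, by omega, by simp, by simp,
          by simp [gseg]; first | omega | (split_ifs <;> omega)⟩
      · exact ⟨q - 1, by omega, by omega, by omega, by simp, by simp,
          by simp [gseg]; first | omega | (split_ifs <;> omega)⟩
    · by_cases hl2 : ℓ = 2
      · by_cases hq1' : q = 1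
        · exact ⟨0, by omega, by omega, by omega, by simp, by simp,
            by simp [gseg]; first | omega | (split_ifs <;> omega)⟩
        · exact ⟨3, by omega, by omega, by omega, by simp, by simp,
            by simp [gseg]; first | omega | (split_ifs <;> omega)⟩
      · by_cases hhalf : 2 * q ≤ ℓ
        · by_cases hq : q % 2 = 1
          · exact ⟨q, by omega, by omega, by omega, by simp, by simp,
              by simp [gseg]; first | omega | (split_ifs <;> omega)⟩
          · exact ⟨q - 1, by omega, by omega, by omega, by simp, by simp,
              by simp [gseg]; first | omega | (split_ifs <;> omega)⟩
        · by_cases hq : q % 2 = 0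
          · exact ⟨q, by omega, by omega, by omega, by simp, by simp,
              by simp [gseg]; first | omega | (split_ifs <;> omega)⟩
          · exact ⟨q + 1, by omega, by omega, by omega, by simp, by simp,
              by simp [gseg]; first | omega | (split_ifs <;> omega)⟩

/-- Dominator's per-segment guarantee. -/
lemma B_seg (ℓ : ℕ) (hl : 1 ≤ ℓ) (L R : Bool) :
    ∃ q : ℕ, 1 ≤ q ∧ q ≤ ℓ ∧ ∀ p : ℕ, p ≤ ℓ + 1 → q ≤ p + 1 → p ≤ q + 1 →
      (p = 0 → L = true) → (p = ℓ + 1 → R = true) →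
      gseg (p - 2) L true + gseg (ℓ - p - 1) true R + 1 ≤ gseg ℓ L R := by
  cases L <;> cases R
  · by_cases he : ℓ % 2 = 0
    · refine ⟨ℓ - 1, by omega, by omega, fun p h1 h2 h3 h4 h5 => ?_⟩
      have hp0 : p ≠ 0 := fun h => by simpa using h4 h
      have hp1 : p ≠ ℓ + 1 := fun h => by simpa using h5 h
      simp [gseg]; first | omega | (split_ifs <;> omega)
    · refine ⟨1, by omega, by omega, fun p h1 h2 h3 h4 h5 => ?_⟩
      have hp0 : p ≠ 0 := fun h => by simpa using h4 h
      have hp1 : p ≠ ℓ + 1 := fun h => by simpa using h5 h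
      simp [gseg]; first | omega | (split_ifs <;> omega)
  · by_cases he : ℓ % 2 = 0
    · refine ⟨ℓ - 1, by omega, by omega, fun p h1 h2 h3 h4 h5 => ?_⟩
      have hp0 : p ≠ 0 := fun h => by simpa using h4 h
      simp [gseg]; first | omega | (split_ifs <;> omega)
    · refine ⟨1, by omega, by omega, fun p h1 h2 h3 h4 h5 => ?_⟩
      have hp0 : p ≠ 0 := fun h => by simpa using h4 h
      simp [gseg]; first | omega | (split_ifs <;> omega)
  · refine ⟨min 2 ℓ, by omega, by omega, fun p h1 h2 h3 h4 h5 => ?_⟩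
    have hp1 : p ≠ ℓ + 1 := fun h => by simpa using h5 h
    simp [gseg]; first | omega | (split_ifs <;> omega)
  · refine ⟨min 2 ℓ, by omega, by omega, fun p h1 h2 h3 h4 h5 => ?_⟩
    simp [gseg]; first | omega | (split_ifs <;> omega)


/-- length of the run of consecutive elements of `S` ending at `u` (minus one). -/
def run (S : Finset ℕ) (u : ℕ) : ℕ :=
  Nat.findGreatest (fun k => Icc (u - k) u ⊆ S) u

variable (n : ℕ)

/-- weight of an undominated vertex `u` in the potential function. -/
def wt (S : Finset ℕ) (u : ℕ) : ℕ :=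
  (if Even (run S u) then 1 else 0) +
  (if u + 1 < n ∧ u + 1 ∉ S ∧ ¬ Even (run S u) ∧ run S u < u then 1 else 0)

/-- the potential function: value of the indicated domination game position. -/
def phi (S : Finset ℕ) : ℕ := ∑ u ∈ S, wt n S u

lemma run_le (S : Finset ℕ) (u : ℕ) : run S u ≤ u := Nat.findGreatest_le u

lemma run_spec {S : Finset ℕ} {u : ℕ} (hu : u ∈ S) : Icc (u - run S u) u ⊆ S := by
  rcases Nat.eq_zero_or_pos (run S u) with h | h
  · rw [h]; intro i hi; simp only [mem_Icc] at hi
    have : i = u := by omega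
    rwa [this]
  · exact Nat.findGreatest_of_ne_zero (m := run S u) rfl (by omega)

lemma run_not_mem {S : Finset ℕ} {u : ℕ} (hu : u ∈ S) (h : run S u < u) :
    u - run S u - 1 ∉ S := by
  intro hmem
  have hng : ¬ (Icc (u - (run S u + 1)) u ⊆ S) := by
    have hlt : run S u < run S u + 1 := Nat.lt_succ_self _
    exact Nat.findGreatest_is_greatest hlt (by omega)
  apply hng
  intro i hi
  simp only [mem_Icc] at hi
  rcases Nat.lt_or_ge i (u - run S u) with h1 | h1
  · have : i = u - run S u - 1 := by omega
    rwa [this]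
  · exact run_spec hu (by simp only [mem_Icc]; omega)

lemma run_Icc {a b u : ℕ} (hau : a ≤ u) (hub : u ≤ b) : run (Icc a b) u = u - a := by
  rw [run, Nat.findGreatest_eq_iff]
  refine ⟨by omega, fun _ => ?_, fun k hk1 hk2 hP => ?_⟩
  · intro i hi; simp only [mem_Icc] at hi ⊢; omega
  · have : u - k ∈ Icc (u - k) u := by simp only [mem_Icc]; omega
    have := hP this
    simp only [mem_Icc] at this
    omega

lemma run_le_run {S T : Finset ℕ} {u : ℕ} (h : ∀ i ≤ u, i ∈ S → i ∈ T) :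
    run S u ≤ run T u := by
  rcases Nat.eq_zero_or_pos (run S u) with h0 | h0
  · omega
  · have hP : Icc (u - run S u) u ⊆ S :=
      Nat.findGreatest_of_ne_zero (m := run S u) rfl (by omega)
    refine Nat.le_findGreatest (run_le S u) ?_
    intro i hi
    have hi' := hi; simp only [mem_Icc] at hi'
    exact h i (by omega) (hP hi)

lemma run_congr {S T : Finset ℕ} {u : ℕ} (h : ∀ i ≤ u, (i ∈ S ↔ i ∈ T)) :
    run S u = run T u :=
  le_antisymm (run_le_run fun i hi => (h i hi).1) (run_le_run fun i hi => (h i hi).2)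

lemma run_congr_above {S T : Finset ℕ} {m u : ℕ} (hmS : m ∉ S) (hmT : m ∉ T)
    (h : ∀ i, m < i → (i ∈ S ↔ i ∈ T)) (hmu : m < u) : run S u = run T u := by
  have aux : ∀ (A B : Finset ℕ), m ∉ A → (∀ i, m < i → (i ∈ A → i ∈ B)) →
      run A u ≤ run B u := by
    intro A B hmA hAB
    rcases Nat.eq_zero_or_pos (run A u) with h0 | h0
    · omega
    · have hP : Icc (u - run A u) u ⊆ A :=
        Nat.findGreatest_of_ne_zero (m := run A u) rfl (by omega)
      have hgap : m < u - run A u := by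
        by_contra hc
        exact hmA (hP (by simp only [mem_Icc]; omega))
      refine Nat.le_findGreatest (run_le A u) ?_
      intro i hi
      have hi' := hi; simp only [mem_Icc] at hi'
      exact hAB i (by omega) (hP hi)
  exact le_antisymm (aux S T hmS fun i hi => (h i hi).1)
    (aux T S hmT fun i hi => (h i hi).2)

lemma wt_congr {S T : Finset ℕ} {u : ℕ} (h : ∀ i ≤ u + 1, (i ∈ S ↔ i ∈ T)) :
    wt n S u = wt n T u := by
  have hr : run S u = run T u := run_congr fun i hi => h i (by omega)
  have h1 : (u + 1 ∈ S) ↔ (u + 1 ∈ T) := h (u + 1) le_rfl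
  simp only [wt, hr, h1]

lemma wt_congr_above {S T : Finset ℕ} {m u : ℕ} (hmS : m ∉ S) (hmT : m ∉ T)
    (h : ∀ i, m < i → (i ∈ S ↔ i ∈ T)) (hmu : m < u) : wt n S u = wt n T u := by
  have hr : run S u = run T u := run_congr_above hmS hmT h hmu
  have h1 : (u + 1 ∈ S) ↔ (u + 1 ∈ T) := h (u + 1) (by omega)
  simp only [wt, hr, h1]

/-- Additivity of the potential over well-separated parts. -/
lemma phi_union {A B : Finset ℕ} (hsep : ∀ a ∈ A, ∀ b ∈ B, a + 3 ≤ b) :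
    phi n (A ∪ B) = phi n A + phi n B := by
  rcases A.eq_empty_or_nonempty with rfl | hA
  · simp [phi]
  have hdisj : Disjoint A B := by
    rw [Finset.disjoint_left]
    intro a ha hb
    have := hsep a ha a hb; omega
  rw [phi, sum_union hdisj]
  congr 1
  · refine sum_congr rfl fun u hu => ?_
    refine wt_congr n fun i hi => ?_
    simp only [mem_union]
    constructor
    · rintro (h | h)
      · exact h
      · have := hsep u hu i h; omega
    · exact Or.inl
  · refine sum_congr rfl fun u hu => ?_
    have hm : A.max' hA + 1 ∉ A ∪ B := by
      simp only [mem_union]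
      rintro (h | h)
      · have := le_max' A _ h; omega
      · have := hsep _ (max'_mem A hA) _ h; omega
    have hmB : A.max' hA + 1 ∉ B := fun h => hm (mem_union_right _ h)
    refine wt_congr_above n hm hmB (fun i hi => ?_) ?_
    · simp only [mem_union]
      constructor
      · rintro (h | h)
        · have := le_max' A _ h; omega
        · exact h
      · exact Or.inr
    · have := hsep _ (max'_mem A hA) _ hu; omega

lemma phi_empty : phi n ∅ = 0 := by simp [phi]


lemma sum_even_Icc (a ℓ : ℕ) :
    (∑ u ∈ Icc a (a + ℓ), if Even (u - a) then 1 else 0) = ℓ / 2 + 1 := by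
  induction ℓ with
  | zero => rw [Nat.add_zero, Finset.Icc_self, Finset.sum_singleton]; simp
  | succ m ih =>
    have hins : Icc a (a + (m + 1)) = insert (a + m + 1) (Icc a (a + m)) := by
      rw [Finset.insert_Icc_right_eq_Icc_add_one (by omega)]
      congr 1
    rw [hins, sum_insert (by simp only [mem_Icc]; omega)]
    rw [ih]
    have : a + m + 1 - a = m + 1 := by omega
    rw [this]
    simp only [Nat.even_iff]
    split_ifs with h <;> omega

lemma phi_Icc {a b : ℕ} (n : ℕ) (hab : a ≤ b) (hb : b < n) :
    phi n (Icc a b) = gseg (b + 1 - a) (decide (0 < a)) (decide (b + 1 < n)) := by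
  have hwt : ∀ u ∈ Icc a b, wt n (Icc a b) u =
      (if Even (u - a) then 1 else 0) +
      (if u = b ∧ b + 1 < n ∧ ¬ Even (b - a) ∧ 0 < a then 1 else 0) := by
    intro u hu
    simp only [mem_Icc] at hu
    have hr : run (Icc a b) u = u - a := run_Icc hu.1 hu.2
    rw [wt, hr]
    congr 1
    have hmem : u + 1 ∈ Icc a b ↔ u + 1 ≤ b := by simp only [mem_Icc]; omega
    by_cases hub : u = b
    · subst hub
      have hnb : u + 1 ∉ Icc a u := by simp only [mem_Icc]; omega
      have h2 : u - a < u ↔ 0 < a := by omega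
      by_cases hn1 : u + 1 < n <;> by_cases he : Even (u - a) <;>
        by_cases ha : 0 < a <;> simp [hnb, hn1, he, ha, h2]
    · have h1 : u + 1 ∈ Icc a b := by simp only [mem_Icc]; omega
      simp [h1, hub]
  rw [phi, sum_congr rfl hwt, sum_add_distrib]
  have h2 : (∑ u ∈ Icc a b, if u = b ∧ b + 1 < n ∧ ¬ Even (b - a) ∧ 0 < a then 1 else 0)
      = if b + 1 < n ∧ ¬ Even (b - a) ∧ 0 < a then 1 else 0 := by
    rw [Finset.sum_eq_single_of_mem b (by simp only [mem_Icc]; omega)]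
    · simp
    · intro c _ hc
      simp [hc]
  rw [h2]
  obtain ⟨ℓ, rfl⟩ : ∃ ℓ, b = a + ℓ := ⟨b - a, by omega⟩
  rw [sum_even_Icc]
  simp only [gseg, Nat.even_iff, Bool.and_eq_true, decide_eq_true_eq]
  have : a + ℓ + 1 - a = ℓ + 1 := by omega
  rw [this]
  have : a + ℓ - a = ℓ := by omega
  rw [this]
  split_ifs <;> omega


/-- closed neighborhood in the ℕ model of the path -/
def nb (n v : ℕ) : Finset ℕ := (range n).filter fun x => v ≤ x + 1 ∧ x ≤ v + 1

lemma mem_nb {n v x : ℕ} : x ∈ nb n v ↔ x < n ∧ v ≤ x + 1 ∧ x ≤ v + 1 := by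
  simp [nb]

/-- validity of a game position. -/
def Valid (n : ℕ) (S : Finset ℕ) : Prop :=
  (∀ x ∈ S, x < n) ∧
    ∀ u, u < n → u ∉ S → ((0 < u ∧ u - 1 ∉ S) ∨ (u + 1 < n → u + 1 ∉ S))

lemma seg_exists {n : ℕ} {S : Finset ℕ} (hval : Valid n S) {u : ℕ} (hu : u ∈ S) :
    ∃ a b, a ≤ u ∧ u ≤ b ∧ b < n ∧ Icc a b ⊆ S ∧
      (∀ x ∈ S, x < a → x + 3 ≤ a) ∧ (∀ x ∈ S, b < x → b + 3 ≤ x) := by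
  obtain ⟨hsub, hv⟩ := hval
  have hun : u < n := hsub u hu
  set a := u - run S u with ha
  set s := Nat.findGreatest (fun k => Icc u (u + k) ⊆ S) (n - 1 - u) with hs
  set b := u + s with hb
  have hsle : s ≤ n - 1 - u := Nat.findGreatest_le _
  have h1 : Icc a u ⊆ S := run_spec hu
  have h2 : Icc u b ⊆ S := by
    rcases Nat.eq_zero_or_pos s with h0 | h0
    · intro i hi; simp only [mem_Icc] at hi
      have : i = u := by omega
      rwa [this]
    · exact Nat.findGreatest_of_ne_zero (m := s) rfl (by omega)
  have hIcc : Icc a b ⊆ S := by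
    intro i hi
    simp only [mem_Icc] at hi
    rcases Nat.le_total i u with h | h
    · exact h1 (by simp only [mem_Icc]; omega)
    · exact h2 (by simp only [mem_Icc]; omega)
  have hb1 : b + 1 ∉ S := by
    rcases Nat.lt_or_ge s (n - 1 - u) with hcase | hcase
    · intro hmem
      have hng : ¬ (Icc u (u + (s + 1)) ⊆ S) := by
        have hlt : s < s + 1 := Nat.lt_succ_self _
        exact Nat.findGreatest_is_greatest hlt (by omega)
      apply hng
      intro i hi
      simp only [mem_Icc] at hi
      rcases Nat.lt_or_ge i (b + 1) with h | h
      · exact h2 (by simp only [mem_Icc]; omega)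
      · have : i = b + 1 := by omega
        rwa [this]
    · intro hmem
      have := hsub _ hmem
      omega
  refine ⟨a, b, by omega, by omega, by omega, hIcc, ?_, ?_⟩
  · -- left gap
    intro x hx hxa
    have ha0 : 0 < a := by omega
    have hrlt : run S u < u := by omega
    have ham : a - 1 ∉ S := by
      have := run_not_mem hu hrlt
      simpa [ha] using this
    have haS : a ∈ S := h1 (by simp only [mem_Icc]; omega)
    rcases hv (a - 1) (by omega) ham with ⟨h01, h02⟩ | h03
    · have hx1 : x ≠ a - 1 := fun h => ham (h ▸ hx)
      have hx2 : x ≠ a - 2 := by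
        intro h
        rw [(by omega : a - 1 - 1 = a - 2)] at h02
        exact h02 (h ▸ hx)
      omega
    · exfalso
      rw [(by omega : a - 1 + 1 = a)] at h03
      exact h03 (by omega) haS
  · -- right gap
    intro x hx hbx
    have hxn : x < n := hsub x hx
    by_cases hbn1 : b + 1 < n
    · have hbS' : b ∈ S := h2 (by simp only [mem_Icc]; omega)
      rcases hv (b + 1) hbn1 hb1 with ⟨_, h02⟩ | h03
      · exfalso
        rw [(by omega : b + 1 - 1 = b)] at h02
        exact h02 hbS'
      · have hx1 : x ≠ b + 1 := fun h => hb1 (h ▸ hx)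
        have hx2 : x ≠ b + 2 := by
          intro h
          rcases Nat.lt_or_ge (b + 2) n with h2' | h2'
          · exact h03 h2' (h ▸ hx)
          · omega
        omega
    · omega

/-- Decomposition of the potential along the segment `[a,b]` of `S`, and after a move. -/
lemma phi_split {n : ℕ} {S : Finset ℕ} {a b : ℕ} (hsub : ∀ x ∈ S, x < n)
    (hab : a ≤ b) (hb : b < n) (hIcc : Icc a b ⊆ S)
    (hLg : ∀ x ∈ S, x < a → x + 3 ≤ a) (hRg : ∀ x ∈ S, b < x → b + 3 ≤ x) :
    phi n S = phi n (S.filter (· < a))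
        + gseg (b + 1 - a) (decide (0 < a)) (decide (b + 1 < n))
        + phi n (S.filter (b < ·)) ∧
    ∀ v, a ≤ v + 1 → v ≤ b + 1 → v < n →
      phi n (S \ nb n v) = phi n (S.filter (· < a))
        + (gseg (v - 1 - a) (decide (0 < a)) true
            + gseg (b - v - 1) true (decide (b + 1 < n)))
        + phi n (S.filter (b < ·)) := by
  set Sl := S.filter (· < a) with hSl
  set Sr := S.filter (b < ·) with hSr
  have hSl3 : ∀ x ∈ Sl, x + 3 ≤ a := by
    intro x hx
    rw [hSl, mem_filter] at hx
    exact hLg x hx.1 hx.2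
  have hSr3 : ∀ x ∈ Sr, b + 3 ≤ x := by
    intro x hx
    rw [hSr, mem_filter] at hx
    exact hRg x hx.1 hx.2
  have hSlS : ∀ x ∈ Sl, x ∈ S := fun x hx => (mem_filter.1 hx).1
  have hSrS : ∀ x ∈ Sr, x ∈ S := fun x hx => (mem_filter.1 hx).1
  constructor
  · have hdecomp : S = Sl ∪ (Icc a b ∪ Sr) := by
      ext x
      simp only [hSl, hSr, mem_union, mem_filter, mem_Icc]
      constructor
      · intro hx
        by_cases h1 : x < a
        · exact Or.inl ⟨hx, h1⟩
        · by_cases h2 : b < x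
          · exact Or.inr (Or.inr ⟨hx, h2⟩)
          · exact Or.inr (Or.inl ⟨by omega, by omega⟩)
      · rintro (⟨h, _⟩ | (h | ⟨h, _⟩))
        · exact h
        · exact hIcc (by simp only [mem_Icc]; omega)
        · exact h
    have sep1 : ∀ x ∈ Sl, ∀ y ∈ Icc a b ∪ Sr, x + 3 ≤ y := by
      intro x hx y hy
      have := hSl3 x hx
      rcases mem_union.1 hy with h | h
      · have := (mem_Icc.1 h).1; omega
      · have := hSr3 y h; omega
    have sep2 : ∀ x ∈ Icc a b, ∀ y ∈ Sr, x + 3 ≤ y := by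
      intro x hx y hy
      have := (mem_Icc.1 hx).2
      have := hSr3 y hy
      omega
    rw [hdecomp, phi_union n sep1, phi_union n sep2, phi_Icc n hab hb]
    ring
  · intro v hv1 hv2 hv3
    set P1 := (Icc a b).filter (fun x => x + 2 ≤ v) with hP1
    set P2 := (Icc a b).filter (fun x => v + 2 ≤ x) with hP2
    have hP1b : ∀ x ∈ P1, a ≤ x ∧ x ≤ b ∧ x + 2 ≤ v := by
      intro x hx; rw [hP1, mem_filter, mem_Icc] at hx; omega
    have hP2b : ∀ x ∈ P2, a ≤ x ∧ x ≤ b ∧ v + 2 ≤ x := by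
      intro x hx; rw [hP2, mem_filter, mem_Icc] at hx; omega
    have hsplit : S \ nb n v = Sl ∪ ((P1 ∪ P2) ∪ Sr) := by
      ext x
      simp only [mem_sdiff, mem_nb, hSl, hSr, hP1, hP2, mem_union, mem_filter, mem_Icc]
      constructor
      · rintro ⟨hxS, hnot⟩
        have hxn : x < n := hsub x hxS
        have hor : x + 2 ≤ v ∨ v + 2 ≤ x := by
          by_contra hc
          push_neg at hc
          exact hnot ⟨hxn, by omega, by omega⟩
        by_cases h1 : x < a
        · exact Or.inl ⟨hxS, h1⟩
        · by_cases h2 : b < x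
          · exact Or.inr (Or.inr ⟨hxS, h2⟩)
          · rcases hor with h | h
            · exact Or.inr (Or.inl (Or.inl ⟨⟨by omega, by omega⟩, h⟩))
            · exact Or.inr (Or.inl (Or.inr ⟨⟨by omega, by omega⟩, h⟩))
      · rintro (⟨hxS, h1⟩ | ((⟨⟨h1, h2⟩, h3⟩ | ⟨⟨h1, h2⟩, h3⟩) | ⟨hxS, h1⟩))
        · have := hLg x hxS h1
          exact ⟨hxS, fun ⟨_, h, h'⟩ => by omega⟩
        · exact ⟨hIcc (by simp only [mem_Icc]; omega), fun ⟨_, h, h'⟩ => by omega⟩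
        · exact ⟨hIcc (by simp only [mem_Icc]; omega), fun ⟨_, h, h'⟩ => by omega⟩
        · have := hRg x hxS h1
          exact ⟨hxS, fun ⟨_, h, h'⟩ => by omega⟩
    have hphi1 : phi n P1 = gseg (v - 1 - a) (decide (0 < a)) true := by
      by_cases hc : a + 2 ≤ v
      · have heq : P1 = Icc a (v - 2) := by
          ext x
          rw [hP1, mem_filter, mem_Icc, mem_Icc]
          omega
        rw [heq, phi_Icc n (by omega) (by omega)]
        rw [(by omega : v - 2 + 1 - a = v - 1 - a), decide_eq_true (by omega : v - 2 + 1 < n)]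
      · have heq : P1 = ∅ := by
          rw [hP1, filter_eq_empty_iff]
          intro x hx
          rw [mem_Icc] at hx
          omega
        rw [heq, phi_empty, (by omega : v - 1 - a = 0), gseg_zero]
    have hphi2 : phi n P2 = gseg (b - v - 1) true (decide (b + 1 < n)) := by
      by_cases hc : v + 2 ≤ b
      · have heq : P2 = Icc (v + 2) b := by
          ext x
          rw [hP2, mem_filter, mem_Icc, mem_Icc]
          omega
        rw [heq, phi_Icc n (by omega) hb]
        rw [(by omega : b + 1 - (v + 2) = b - v - 1), decide_eq_true (by omega : 0 < v + 2)]
      · have heq : P2 = ∅ := by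
          rw [hP2, filter_eq_empty_iff]
          intro x hx
          rw [mem_Icc] at hx
          omega
        rw [heq, phi_empty, (by omega : b - v - 1 = 0), gseg_zero]
    have sep1 : ∀ x ∈ Sl, ∀ y ∈ (P1 ∪ P2) ∪ Sr, x + 3 ≤ y := by
      intro x hx y hy
      have := hSl3 x hx
      rcases mem_union.1 hy with h | h
      · rcases mem_union.1 h with h' | h'
        · have := hP1b y h'; omega
        · have := hP2b y h'; omega
      · have := hSr3 y h; omega
    have sep2 : ∀ x ∈ P1 ∪ P2, ∀ y ∈ Sr, x + 3 ≤ y := by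
      intro x hx y hy
      have := hSr3 y hy
      rcases mem_union.1 hx with h | h
      · have := hP1b x h; omega
      · have := hP2b x h; omega
    have sep3 : ∀ x ∈ P1, ∀ y ∈ P2, x + 3 ≤ y := by
      intro x hx y hy
      have := hP1b x hx
      have := hP2b y hy
      omega
    rw [hsplit, phi_union n sep1, phi_union n sep2, phi_union n sep3, hphi1, hphi2]
    ring

/-- Staller can keep the potential from dropping by more than 1. -/
lemma stepA {n : ℕ} {S : Finset ℕ} (hval : Valid n S) {u : ℕ} (hu : u ∈ S) :
    ∃ v, u ≤ v + 1 ∧ v ≤ u + 1 ∧ v < n ∧ phi n S ≤ phi n (S \ nb n v) + 1 := by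
  obtain ⟨a, b, hau, hub, hbn, hIcc, hLg, hRg⟩ := seg_exists hval hu
  obtain ⟨h1, h2⟩ := phi_split hval.1 (le_trans hau hub) hbn hIcc hLg hRg
  obtain ⟨p, hp1, hp2, hp3, hp4, hp5, hineq⟩ :=
    A_seg (b + 1 - a) (u + 1 - a) (by omega) (by omega) (decide (0 < a)) (decide (b + 1 < n))
  have hp4' : p = 0 → 0 < a := fun h => by simpa using hp4 h
  have hp5' : p = b + 1 - a + 1 → b + 1 < n := fun h => by simpa using hp5 h
  refine ⟨a + p - 1, by omega, by omega, by omega, ?_⟩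
  rw [h1, h2 (a + p - 1) (by omega) (by omega) (by omega)]
  rw [(by omega : a + p - 1 - 1 - a = p - 2), (by omega : b - (a + p - 1) - 1 = b + 1 - a - p - 1)]
  omega

/-- Dominator can make the potential drop by at least 1, whatever Staller answers. -/
lemma stepB {n : ℕ} {S : Finset ℕ} (hval : Valid n S) (hne : S.Nonempty) :
    ∃ u ∈ S, u < n ∧ ∀ v, u ≤ v + 1 → v ≤ u + 1 → v < n →
      phi n (S \ nb n v) + 1 ≤ phi n S := by
  obtain ⟨u0, hu0⟩ := hne
  obtain ⟨a, b, hau, hub, hbn, hIcc, hLg, hRg⟩ := seg_exists hval hu0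
  obtain ⟨h1, h2⟩ := phi_split hval.1 (le_trans hau hub) hbn hIcc hLg hRg
  obtain ⟨q, hq1, hq2, hB⟩ := B_seg (b + 1 - a) (by omega) (decide (0 < a)) (decide (b + 1 < n))
  refine ⟨a + q - 1, hIcc (by simp only [mem_Icc]; omega), by omega, ?_⟩
  intro v hv1 hv2 hv3
  have hBv := hB (v + 1 - a) (by omega) (by omega) (by omega)
    (fun h => decide_eq_true (by omega)) (fun h => decide_eq_true (by omega))
  rw [h1, h2 v (by omega) (by omega) hv3]
  rw [(by omega : v - 1 - a = v + 1 - a - 2), (by omega : b - v - 1 = b + 1 - a - (v + 1 - a) - 1)]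
  omega


variable {V : Type*} [Fintype V]

lemma mem_undom_iff {G : SimpleGraph V} {D : Finset V} {u : V} :
    u ∈ undom G D ↔ ∀ w ∈ D, u ∉ cnbhd G w := by
  simp [undom]

lemma undom_insert [DecidableEq V] (G : SimpleGraph V) (v : V) (D : Finset V) :
    undom G (insert v D) = undom G D \ cnbhd G v := by
  ext u
  simp only [mem_undom_iff, mem_sdiff, Finset.forall_mem_insert]
  tauto

lemma pathPow_adj {n k : ℕ} {i j : Fin n} :
    (pathPow n k).Adj i j ↔ i ≠ j ∧ (i : ℕ) ≤ (j : ℕ) + k ∧ (j : ℕ) ≤ (i : ℕ) + k :=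
  Iff.rfl

lemma mem_cnbhd_path {n : ℕ} {v x : Fin n} :
    x ∈ cnbhd (pathPow n 1) v ↔ (v : ℕ) ≤ (x : ℕ) + 1 ∧ (x : ℕ) ≤ (v : ℕ) + 1 := by
  simp only [cnbhd, mem_insert, SimpleGraph.mem_neighborFinset, pathPow_adj]
  constructor
  · rintro (rfl | ⟨hne, h1, h2⟩)
    · omega
    · exact ⟨h1, h2⟩
  · rintro ⟨h1, h2⟩
    by_cases hxy : x = v
    · exact Or.inl hxy
    · refine Or.inr ⟨?_, h1, h2⟩
      exact fun h => hxy h.symm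

/-- the set of undominated vertices, as a set of naturals -/
def toS (n : ℕ) (D : Finset (Fin n)) : Finset ℕ :=
  (undom (pathPow n 1) D).image Fin.val

lemma mem_toS {n : ℕ} {D : Finset (Fin n)} {x : ℕ} (hx : x < n) :
    x ∈ toS n D ↔ (⟨x, hx⟩ : Fin n) ∈ undom (pathPow n 1) D := by
  simp only [toS, mem_image]
  constructor
  · rintro ⟨y, hy, rfl⟩
    rwa [Fin.eta]
  · intro h
    exact ⟨⟨x, hx⟩, h, rfl⟩

lemma toS_insert (n : ℕ) (D : Finset (Fin n)) (v : Fin n) :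
    toS n (insert v D) = toS n D \ nb n (v : ℕ) := by
  rw [toS, undom_insert, Finset.image_sdiff _ _ Fin.val_injective]
  congr 1
  ext x
  simp only [mem_image, mem_nb]
  constructor
  · rintro ⟨y, hy, rfl⟩
    rw [mem_cnbhd_path] at hy
    exact ⟨y.isLt, hy⟩
  · rintro ⟨hx, h1, h2⟩
    exact ⟨⟨x, hx⟩, mem_cnbhd_path.2 ⟨h1, h2⟩, rfl⟩

lemma valid_toS (n : ℕ) (D : Finset (Fin n)) : Valid n (toS n D) := by
  constructor
  · intro x hx
    obtain ⟨y, _, rfl⟩ := mem_image.1 hx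
    exact y.isLt
  · intro u hu hnot
    rw [mem_toS hu, mem_undom_iff] at hnot
    push_neg at hnot
    obtain ⟨w, hwD, hw⟩ := hnot
    rw [mem_cnbhd_path] at hw
    simp only [Fin.val_mk] at hw
    rcases Nat.lt_or_ge (w : ℕ) u with hlt | hge
    · left
      refine ⟨by omega, fun hmem => ?_⟩
      rw [mem_toS (by omega : u - 1 < n), mem_undom_iff] at hmem
      exact hmem w hwD (mem_cnbhd_path.2 ⟨by simp; omega, by simp; omega⟩)
    · right
      intro hun1 hmem
      rw [mem_toS hun1, mem_undom_iff] at hmem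
      exact hmem w hwD (mem_cnbhd_path.2 ⟨by simp; omega, by simp; omega⟩)

lemma giAux_eq (n : ℕ) : ∀ (fuel : ℕ) (D : Finset (Fin n)),
    (undom (pathPow n 1) D).card ≤ fuel →
    giAux (pathPow n 1) fuel D = phi n (toS n D) := by
  intro fuel
  induction fuel with
  | zero =>
    intro D hD
    have hemp : undom (pathPow n 1) D = ∅ := Finset.card_eq_zero.mp (Nat.le_zero.mp hD)
    rw [giAux, toS, hemp, image_empty, phi_empty]
  | succ fuel ih =>
    intro D hD
    have hstep : ∀ vF uF : Fin n, uF ∈ undom (pathPow n 1) D →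
        uF ∈ cnbhd (pathPow n 1) vF →
        (undom (pathPow n 1) (insert vF D)).card ≤ fuel := by
      intro vF uF huF hmem
      have hss : undom (pathPow n 1) (insert vF D) ⊂ undom (pathPow n 1) D := by
        rw [undom_insert]
        refine (Finset.ssubset_iff_of_subset sdiff_subset).2 ⟨uF, huF, ?_⟩
        simp [mem_sdiff, huF, hmem]
      have := Finset.card_lt_card hss
      omega
    by_cases h : (undom (pathPow n 1) D).Nonempty
    · rw [giAux, dif_pos h]
      have hinsEq : ∀ (inst : DecidableEq (Fin n)) (v : Fin n) (E : Finset (Fin n)),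
          @Insert.insert _ _ (@Finset.instInsert _ inst) v E
            = @Insert.insert _ _ (@Finset.instInsert _ (instDecidableEqFin n)) v E := by
        intro inst v E
        ext x
        simp [Finset.mem_insert]
      simp only [hinsEq]
      apply le_antisymm
      · obtain ⟨u, huS, hun, hB⟩ := stepB (valid_toS n D) (h.image Fin.val)
        have huF : (⟨u, hun⟩ : Fin n) ∈ undom (pathPow n 1) D := (mem_toS hun).1 huS
        refine le_trans (inf'_le _ huF) ?_
        apply sup'_le
        intro vF hvF
        rw [mem_cnbhd_path] at hvF
        have hsym : (⟨u, hun⟩ : Fin n) ∈ cnbhd (pathPow n 1) vF :=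
          mem_cnbhd_path.2 ⟨by simpa using hvF.2, by simpa using hvF.1⟩
        rw [ih (insert vF D) (hstep vF _ huF hsym), toS_insert]
        exact hB (vF : ℕ) (by simpa using hvF.1) (by simpa using hvF.2) vF.isLt
      · apply le_inf'
        intro uF huF
        have huS : (uF : ℕ) ∈ toS n D := mem_image.2 ⟨uF, huF, rfl⟩
        obtain ⟨v, hv1, hv2, hv3, hA⟩ := stepA (valid_toS n D) huS
        have hvF : (⟨v, hv3⟩ : Fin n) ∈ cnbhd (pathPow n 1) uF :=
          mem_cnbhd_path.2 ⟨by simpa using hv1, by simpa using hv2⟩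
        refine le_trans ?_ (le_sup' _ hvF)
        have hsym : uF ∈ cnbhd (pathPow n 1) (⟨v, hv3⟩ : Fin n) :=
          mem_cnbhd_path.2 ⟨by simpa using hv2, by simpa using hv1⟩
        rw [ih (insert (⟨v, hv3⟩ : Fin n) D) (hstep _ uF huF hsym), toS_insert]
        exact hA
    · rw [giAux, dif_neg h]
      have hemp : undom (pathPow n 1) D = ∅ := not_nonempty_iff_eq_empty.1 h
      rw [toS, hemp, image_empty, phi_empty]


/-- `γᵢ(P_n) = ⌈n/2⌉` for every `n ≥ 1`
(the path `P_n` is the first power of the path). -/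
theorem stmt9 (n : ℕ) (hn : 1 ≤ n) :
    indicatedDomNum (pathPow n 1) = (n + 1) / 2 := by
  have hcard : (undom (pathPow n 1) (∅ : Finset (Fin n))).card ≤ Fintype.card (Fin n) :=
    Finset.card_le_univ _
  rw [indicatedDomNum, giAux_eq n _ ∅ hcard]
  have hundom : undom (pathPow n 1) (∅ : Finset (Fin n)) = univ := by
    ext u
    simp [mem_undom_iff]
  have htoS : toS n ∅ = Icc 0 (n - 1) := by
    rw [toS, hundom]
    ext x
    simp only [mem_image, mem_Icc]
    constructor
    · rintro ⟨y, _, rfl⟩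
      exact ⟨Nat.zero_le _, by omega⟩
    · rintro ⟨_, hx⟩
      exact ⟨⟨x, by omega⟩, mem_univ _, rfl⟩
  rw [htoS, phi_Icc n (by omega) (by omega)]
  simp only [gseg]
  have h1 : ¬ (0 < 0) := by omega
  rw [decide_eq_false h1]
  simp only [Bool.false_and, Bool.false_eq_true, false_and, if_false]
  omega


end IndicatedDom
end
end
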